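/- Let b < -1, set γ = -(b+1)/2 > 0, and let A ∈ ℝ, z₀ ∈ ℝ. Define U(z) = A (cosh(γ(z - z₀)))^{-1/γ}. Then U - U'' = M, where M(z) = (A(1-b)/2) (cosh(γ(z - z₀)))^{b/γ}. That is, the stationary lefton profile U satisfies U(z) - U''(z) = (A(1-b)/2) (cosh(γ(z-z₀)))^{b/γ} for all real z. -/

import Mathlib

/-- The stationary lefton profile `U(z) = A cosh(γ(z-z₀))^{-1/γ}` with
`γ = -(b+1)/2` for `b < -1` satisfies `U - U'' = M` with
`M(z) = (A(1-b)/2) cosh(γ(z-z₀))^{b/γ}`. -/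
theorem lefton_momentum (b A z₀ : ℝ) (hb : b < -1) (γ : ℝ) (hγ : γ = -(b + 1) / 2)
    (U M : ℝ → ℝ)
    (hU : ∀ z : ℝ, U z = A * Real.cosh (γ * (z - z₀)) ^ (-1 / γ))
    (hM : ∀ z : ℝ, M z = (A * (1 - b) / 2) * Real.cosh (γ * (z - z₀)) ^ (b / γ)) :
    ∀ z : ℝ, U z - iteratedDeriv 2 U z = M z := by
  have hγpos : 0 < γ := by rw [hγ]; linarith
  have hγne : γ ≠ 0 := ne_of_gt hγpos
  set p : ℝ := -1 / γ with hp
  have hγp : γ * p = -1 := by rw [hp]; field_simp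
  have hθ : ∀ z : ℝ, HasDerivAt (fun z => γ * (z - z₀)) γ z := fun z => by
    simpa using ((hasDerivAt_id z).sub_const z₀).const_mul γ
  have hcosh : ∀ z : ℝ, HasDerivAt (fun z => Real.cosh (γ * (z - z₀)))
      (γ * Real.sinh (γ * (z - z₀))) z := fun z => by
    simpa [mul_comm, Function.comp_def] using (Real.hasDerivAt_cosh (γ * (z - z₀))).comp z (hθ z)
  have hsinh : ∀ z : ℝ, HasDerivAt (fun z => Real.sinh (γ * (z - z₀)))
      (γ * Real.cosh (γ * (z - z₀))) z := fun z => by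
    simpa [mul_comm, Function.comp_def] using (Real.hasDerivAt_sinh (γ * (z - z₀))).comp z (hθ z)
  have hpow : ∀ (q : ℝ) (z : ℝ), HasDerivAt (fun z => Real.cosh (γ * (z - z₀)) ^ q)
      (γ * Real.sinh (γ * (z - z₀)) * q * Real.cosh (γ * (z - z₀)) ^ (q - 1)) z :=
    fun q z => (hcosh z).rpow_const (Or.inl (ne_of_gt (Real.cosh_pos _)))
  have hU1 : ∀ z : ℝ, HasDerivAt U
      (-A * Real.sinh (γ * (z - z₀)) * Real.cosh (γ * (z - z₀)) ^ (p - 1)) z := by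
    intro z
    have h := (hpow p z).const_mul A
    have hfun : U = fun z => A * Real.cosh (γ * (z - z₀)) ^ p := funext hU
    rw [hfun]
    refine h.congr_deriv (Eq.symm ?_)
    linear_combination (-A * Real.sinh (γ * (z - z₀)) *
      Real.cosh (γ * (z - z₀)) ^ (p - 1)) * hγp
  have hderivU : deriv U = fun z =>
      -A * Real.sinh (γ * (z - z₀)) * Real.cosh (γ * (z - z₀)) ^ (p - 1) :=
    funext fun z => (hU1 z).deriv
  intro z
  set s := Real.sinh (γ * (z - z₀)) with hs
  set c := Real.cosh (γ * (z - z₀)) with hc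
  have hcpos : 0 < c := Real.cosh_pos _
  have hU2 : HasDerivAt (deriv U)
      ((-A * (γ * c)) * c ^ (p - 1) +
        (-A * s) * (γ * s * (p - 1) * c ^ (p - 1 - 1))) z := by
    rw [hderivU]
    exact (((hsinh z).const_mul (-A)).mul (hpow (p - 1) z))
  have hit : iteratedDeriv 2 U z = deriv (deriv U) z := by
    rw [iteratedDeriv_succ, iteratedDeriv_one]
  rw [hit, hU2.deriv, hU z, hM z]
  have hbγ : b / γ = p - 2 := by
    rw [div_eq_iff hγne]
    linear_combination -hγp + 2 * hγ
  rw [hbγ]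
  simp only [← hc]
  set t := c ^ (p - 2) with ht
  have e1 : c ^ p = t * c * c := by
    have h2 : c ^ ((p - 2) + 1 + 1) = c ^ (p - 2) * c ^ (1:ℝ) * c ^ (1:ℝ) := by
      rw [Real.rpow_add hcpos, Real.rpow_add hcpos]
    rw [show (p - 2) + 1 + 1 = p by ring] at h2
    rw [h2, ht, Real.rpow_one]
  have e2 : c ^ (p - 1) = t * c := by
    have h2 : c ^ ((p - 2) + 1) = c ^ (p - 2) * c ^ (1:ℝ) := Real.rpow_add hcpos _ _
    rw [show (p - 2) + 1 = p - 1 by ring] at h2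
    rw [h2, ht, Real.rpow_one]
  have e3 : c ^ (p - 1 - 1) = t := by rw [ht, show p - 1 - 1 = p - 2 by ring]
  have hsq : s ^ 2 = c ^ 2 - 1 := by
    rw [hs, hc]; have := Real.cosh_sq (γ * (z - z₀)); nlinarith [this]
  have hAb : A * (1 - b) / 2 = A * (1 + γ) := by rw [hγ]; ring
  rw [e1, e2, e3, hAb]
  linear_combination A * γ * (p - 1) * t * hsq + A * t * (c ^ 2 - 1) * hγp
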